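/- Fix γ ∈ [0,1) and assume every induced kernel P_{π¹,π²} is γ-contractive and has a stationary distribution d_{π¹,π²}. Let I₂ ≥ 0 satisfy ‖P_{π¹,π²} − P_{π¹,π²'}‖_∞ ≤ I₂ · ‖π² − π²'‖_∞ for all policies π¹, π², π²'. Let (π¹_t, π²_t) and (π¹_{t−1}, π²_{t−1}) be policy pairs with ‖π¹_t − π¹_{t−1}‖_∞ ≤ ρ₁ and ‖π²_t − π²_{t−1}‖_∞ ≤ ρ₂. Then: (i) ‖d_{π¹_t,π²_t} − d_{π¹_{t−1},π²_{t−1}}‖₁ ≤ (ρ₁ + I₂·ρ₂)/(1 − γ); and (ii) for every agent-1 policy π¹, ‖d_{π¹,π²_t} − d_{π¹,π²_{t−1}}‖₁ ≤ I₂·ρ₂/(1 − γ). -/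
import Mathlib


/-- A probability vector on a finite type: nonnegative entries summing to 1. -/
def IsProbVec {S : Type*} [Fintype S] (d : S → ℝ) : Prop :=
  (∀ s, 0 ≤ d s) ∧ ∑ s, d s = 1

/-- A policy: each row is a probability vector over actions. -/
def IsPolicy {S A : Type*} [Fintype A] (π : S → A → ℝ) : Prop :=
  ∀ s, (∀ a, 0 ≤ π s a) ∧ ∑ a, π s a = 1

/-- Maximum of a real-valued function over a nonempty finite type. -/
noncomputable def fmax {S : Type*} [Fintype S] [Nonempty S] (f : S → ℝ) : ℝ :=
  Finset.univ.sup' Finset.univ_nonempty f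

/-- Policy distance ‖π − π'‖_∞ = max_s ∑_a |π(s,a) − π'(s,a)|. -/
noncomputable def pdist {S A : Type*} [Fintype S] [Nonempty S] [Fintype A]
    (π π' : S → A → ℝ) : ℝ :=
  fmax (fun s => ∑ a, |π s a - π' s a|)

/-- Kernel distance ‖K − K'‖_∞ = max_s ∑_{s'} |K(s,s') − K'(s,s')|. -/
noncomputable def kdist {S : Type*} [Fintype S] [Nonempty S] (K K' : S → S → ℝ) : ℝ :=
  fmax (fun s => ∑ s', |K s s' - K' s s'|)

/-- The induced kernel P_{π₁,π₂}(s,s') = ∑_{a₁,a₂} π₁(s,a₁)·π₂(s,a₂)·P(s,a₁,a₂,s'). -/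
def kernel {S A₁ A₂ : Type*} [Fintype A₁] [Fintype A₂]
    (P : S → A₁ → A₂ → S → ℝ) (π₁ : S → A₁ → ℝ) (π₂ : S → A₂ → ℝ) : S → S → ℝ :=
  fun s s' => ∑ a₁, ∑ a₂, π₁ s a₁ * π₂ s a₂ * P s a₁ a₂ s'

/-- Row-vector–matrix multiplication: (d ⬝ K) s' = ∑ s, d s · K s s'. -/
def vmul {S : Type*} [Fintype S] (d : S → ℝ) (K : S → S → ℝ) : S → ℝ :=
  fun s' => ∑ s, d s * K s s'

/-- L1 norm of a vector: ‖x‖₁ = ∑ s, |x s|. -/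
def l1 {S : Type*} [Fintype S] (x : S → ℝ) : ℝ := ∑ s, |x s|

/-- γ-contractivity. -/
def Contractive {S : Type*} [Fintype S] (γ : ℝ) (K : S → S → ℝ) : Prop :=
  ∀ d d' : S → ℝ, IsProbVec d → IsProbVec d' →
    l1 (fun s => vmul d K s - vmul d' K s) ≤ γ * l1 (fun s => d s - d' s)

lemma l1_tri {S : Type*} [Fintype S] (f g h : S → ℝ) :
    l1 (fun s => f s - h s) ≤ l1 (fun s => f s - g s) + l1 (fun s => g s - h s) := by
  unfold l1
  rw [← Finset.sum_add_distrib]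
  refine Finset.sum_le_sum fun s _ => ?_
  have : f s - h s = (f s - g s) + (g s - h s) := by ring
  show |f s - h s| ≤ |f s - g s| + |g s - h s|
  rw [this]; exact abs_add_le _ _

lemma l1_vmul_diff_le {S : Type*} [Fintype S] [Nonempty S] (d : S → ℝ) (hd : IsProbVec d)
    (K K' : S → S → ℝ) :
    l1 (fun s' => vmul d K s' - vmul d K' s') ≤ kdist K K' := by
  unfold l1 vmul kdist fmax
  calc ∑ s', |∑ s, d s * K s s' - ∑ s, d s * K' s s'|
      ≤ ∑ s', ∑ s, d s * |K s s' - K' s s'| := by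
        refine Finset.sum_le_sum fun s' _ => ?_
        rw [← Finset.sum_sub_distrib]
        refine (Finset.abs_sum_le_sum_abs _ _).trans (Finset.sum_le_sum fun s _ => ?_)
        rw [← mul_sub, abs_mul, abs_of_nonneg (hd.1 s)]
    _ = ∑ s, d s * ∑ s', |K s s' - K' s s'| := by
        rw [Finset.sum_comm]; simp [Finset.mul_sum]
    _ ≤ ∑ s, d s * kdist K K' := by
        refine Finset.sum_le_sum fun s _ => ?_
        exact mul_le_mul_of_nonneg_left
          (Finset.le_sup' (fun s => ∑ s', |K s s' - K' s s'|) (Finset.mem_univ s)) (hd.1 s)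
    _ = Finset.univ.sup' Finset.univ_nonempty (fun s => ∑ s', |K s s' - K' s s'|) := by
        rw [← Finset.sum_mul, hd.2, one_mul]
        unfold kdist fmax
        rfl
    _ = kdist K K' := rfl

lemma stat_bound {S : Type*} [Fintype S] [Nonempty S] (γ : ℝ) (hγ1 : γ < 1)
    (K K' : S → S → ℝ) (hK : Contractive γ K)
    (d d' : S → ℝ) (hd : IsProbVec d) (hd' : IsProbVec d')
    (hfd : vmul d K = d) (hfd' : vmul d' K' = d') :
    l1 (fun s => d s - d' s) ≤ kdist K K' / (1 - γ) := by
  have hγ : 0 < 1 - γ := by linarith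
  have h1 : l1 (fun s => d s - d' s) ≤
      l1 (fun s => vmul d K s - vmul d' K s) + l1 (fun s => vmul d' K s - vmul d' K' s) := by
    have := l1_tri (fun s => vmul d K s) (fun s => vmul d' K s) (fun s => vmul d' K' s)
    simpa [hfd, hfd'] using this
  have h2 := hK d d' hd hd'
  have h3 := l1_vmul_diff_le d' hd' K K'
  rw [le_div_iff₀ hγ]
  nlinarith [h1, h2, h3]

lemma kdist_pi1 {S A₁ A₂ : Type*} [Fintype S] [Nonempty S]
    [Fintype A₁] [Nonempty A₁] [Fintype A₂] [Nonempty A₂]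
    (P : S → A₁ → A₂ → S → ℝ) (hP : ∀ s a₁ a₂, IsProbVec (P s a₁ a₂))
    (π₁ π₁' : S → A₁ → ℝ) (π₂ : S → A₂ → ℝ) (hπ₂ : IsPolicy π₂) :
    kdist (kernel P π₁ π₂) (kernel P π₁' π₂) ≤ pdist π₁ π₁' := by
  unfold kdist fmax
  apply Finset.sup'_le
  intro s _
  have key : ∀ s', |kernel P π₁ π₂ s s' - kernel P π₁' π₂ s s'| ≤
      ∑ a₁, ∑ a₂, |π₁ s a₁ - π₁' s a₁| * (π₂ s a₂ * P s a₁ a₂ s') := by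
    intro s'
    unfold kernel
    rw [← Finset.sum_sub_distrib]
    refine (Finset.abs_sum_le_sum_abs _ _).trans (Finset.sum_le_sum fun a₁ _ => ?_)
    rw [← Finset.sum_sub_distrib]
    refine (Finset.abs_sum_le_sum_abs _ _).trans (Finset.sum_le_sum fun a₂ _ => ?_)
    have he : π₁ s a₁ * π₂ s a₂ * P s a₁ a₂ s' - π₁' s a₁ * π₂ s a₂ * P s a₁ a₂ s'
        = (π₁ s a₁ - π₁' s a₁) * (π₂ s a₂ * P s a₁ a₂ s') := by ring
    rw [he, abs_mul,
      abs_of_nonneg (mul_nonneg ((hπ₂ s).1 a₂) ((hP s a₁ a₂).1 s'))]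
  calc ∑ s', |kernel P π₁ π₂ s s' - kernel P π₁' π₂ s s'|
      ≤ ∑ s', ∑ a₁, ∑ a₂, |π₁ s a₁ - π₁' s a₁| * (π₂ s a₂ * P s a₁ a₂ s') :=
        Finset.sum_le_sum fun s' _ => key s'
    _ = ∑ a₁, |π₁ s a₁ - π₁' s a₁| := by
        rw [Finset.sum_comm]
        refine Finset.sum_congr rfl fun a₁ _ => ?_
        rw [Finset.sum_comm]
        have : ∀ a₂, ∑ s', |π₁ s a₁ - π₁' s a₁| * (π₂ s a₂ * P s a₁ a₂ s')
            = |π₁ s a₁ - π₁' s a₁| * π₂ s a₂ := by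
          intro a₂
          rw [← Finset.mul_sum, ← Finset.mul_sum, (hP s a₁ a₂).2, mul_one]
        rw [Finset.sum_congr rfl fun a₂ _ => this a₂, ← Finset.mul_sum, (hπ₂ s).2, mul_one]
    _ ≤ pdist π₁ π₁' := by
        unfold pdist fmax
        exact Finset.le_sup' (fun s => ∑ a, |π₁ s a - π₁' s a|) (Finset.mem_univ s)

/-- Lemma 2 of the paper: change magnitudes of stationary distributions
of the induced kernels across two consecutive episodes. -/
theorem stmt_5 {S A₁ A₂ : Type*} [Fintype S] [Nonempty S]
    [Fintype A₁] [Nonempty A₁] [Fintype A₂] [Nonempty A₂]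
    (P : S → A₁ → A₂ → S → ℝ) (hP : ∀ s a₁ a₂, IsProbVec (P s a₁ a₂))
    (γ : ℝ) (hγ0 : 0 ≤ γ) (hγ1 : γ < 1)
    (hcontr : ∀ (π₁ : S → A₁ → ℝ) (π₂ : S → A₂ → ℝ), IsPolicy π₁ → IsPolicy π₂ →
      Contractive γ (kernel P π₁ π₂))
    (dstat : (S → A₁ → ℝ) → (S → A₂ → ℝ) → S → ℝ)
    (hdstat : ∀ (π₁ : S → A₁ → ℝ) (π₂ : S → A₂ → ℝ), IsPolicy π₁ → IsPolicy π₂ →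
      IsProbVec (dstat π₁ π₂) ∧ vmul (dstat π₁ π₂) (kernel P π₁ π₂) = dstat π₁ π₂)
    (I₂ : ℝ) (hI₂0 : 0 ≤ I₂)
    (hinfl : ∀ (π₁ : S → A₁ → ℝ) (π₂ π₂' : S → A₂ → ℝ),
      IsPolicy π₁ → IsPolicy π₂ → IsPolicy π₂' →
      kdist (kernel P π₁ π₂) (kernel P π₁ π₂') ≤ I₂ * pdist π₂ π₂')
    (ρ₁ ρ₂ : ℝ)
    (π₁t π₁p : S → A₁ → ℝ) (hπ₁t : IsPolicy π₁t) (hπ₁p : IsPolicy π₁p)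
    (π₂t π₂p : S → A₂ → ℝ) (hπ₂t : IsPolicy π₂t) (hπ₂p : IsPolicy π₂p)
    (hρ₁ : pdist π₁t π₁p ≤ ρ₁) (hρ₂ : pdist π₂t π₂p ≤ ρ₂) :
    l1 (fun s => dstat π₁t π₂t s - dstat π₁p π₂p s) ≤ (ρ₁ + I₂ * ρ₂) / (1 - γ) ∧
    ∀ π₁ : S → A₁ → ℝ, IsPolicy π₁ →
      l1 (fun s => dstat π₁ π₂t s - dstat π₁ π₂p s) ≤ I₂ * ρ₂ / (1 - γ) := by
  have hγ : 0 < 1 - γ := by linarith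
  -- generic bound for changing π₂ with π₁ fixed
  have part2 : ∀ π₁ : S → A₁ → ℝ, IsPolicy π₁ →
      l1 (fun s => dstat π₁ π₂t s - dstat π₁ π₂p s) ≤ I₂ * ρ₂ / (1 - γ) := by
    intro π₁ hπ₁
    obtain ⟨hdt, hft⟩ := hdstat π₁ π₂t hπ₁ hπ₂t
    obtain ⟨hdp, hfp⟩ := hdstat π₁ π₂p hπ₁ hπ₂p
    have h := stat_bound γ hγ1 (kernel P π₁ π₂t) (kernel P π₁ π₂p)
      (hcontr π₁ π₂t hπ₁ hπ₂t) _ _ hdt hdp hft hfp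
    exact h.trans (div_le_div_of_nonneg_right
      ((hinfl π₁ π₂t π₂p hπ₁ hπ₂t hπ₂p).trans (mul_le_mul_of_nonneg_left hρ₂ hI₂0)) hγ.le)
  refine ⟨?_, part2⟩
  -- part 1
  obtain ⟨hdtt, hftt⟩ := hdstat π₁t π₂t hπ₁t hπ₂t
  obtain ⟨hdpt, hfpt⟩ := hdstat π₁p π₂t hπ₁p hπ₂t
  obtain ⟨hdpp, hfpp⟩ := hdstat π₁p π₂p hπ₁p hπ₂p
  have h1 : l1 (fun s => dstat π₁t π₂t s - dstat π₁p π₂t s) ≤ ρ₁ / (1 - γ) := by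
    have h := stat_bound γ hγ1 (kernel P π₁t π₂t) (kernel P π₁p π₂t)
      (hcontr π₁t π₂t hπ₁t hπ₂t) _ _ hdtt hdpt hftt hfpt
    exact h.trans (div_le_div_of_nonneg_right
      ((kdist_pi1 P hP π₁t π₁p π₂t hπ₂t).trans hρ₁) hγ.le)
  have h2 : l1 (fun s => dstat π₁p π₂t s - dstat π₁p π₂p s) ≤ I₂ * ρ₂ / (1 - γ) :=
    part2 π₁p hπ₁p
  have htri := l1_tri (dstat π₁t π₂t) (dstat π₁p π₂t) (dstat π₁p π₂p)
  have : (ρ₁ + I₂ * ρ₂) / (1 - γ) = ρ₁ / (1 - γ) + I₂ * ρ₂ / (1 - γ) := by ring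
  rw [this]
  linarith
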